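/- Let p be a prime and let K be a finite field of characteristic p. Let F be a finite-dimensional K-vector space equipped with a binary operation * : F × F → F such that: (i) a*(x + y) = a*x + a*y for all a, x, y ∈ F; (ii) for all a, b ∈ F with a ≠ b, the map z ↦ a*z − b*z is a bijection of F; and (iii) m*(k·x) = k·(m*x) for all m, x ∈ F and all scalars k ∈ K (the kernel of the prequasifield contains K). Let V := F ⊕ F, and let g : F → K be a balanced function, meaning each value in K is taken exactly |F|/|K| times. Define f : V → K by f(0, y) := g(0) for all y ∈ F, and, for x ≠ 0, f(x, y) := g(m) where m is the unique element of F with y = m*x. Then f is bent: for every nonzero z ∈ V and every c ∈ K, the number of v ∈ V with f(v + z) − f(v) = c equals |V|/|K|. -/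

import Mathlib

open Finset

/-- Theorem: for a prequasifield `(F, +, *)` of characteristic `p` whose kernel
contains the field `K`, and a balanced function `g : F → K`, the function
`f : F ⊕ F → K` defined by `f (0, y) = g 0` and `f (x, m*x) = g m` for `x ≠ 0`
is bent. -/
theorem bent_of_prequasifield {p : ℕ} [Fact p.Prime]
    {K : Type*} [Field K] [Fintype K] [CharP K p]
    {F : Type*} [AddCommGroup F] [Module K F] [Fintype F]
    (mul : F → F → F)
    (hdist : ∀ a x y : F, mul a (x + y) = mul a x + mul a y)
    (hbij : ∀ a b : F, a ≠ b → Function.Bijective (fun z => mul a z - mul b z))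
    (hker : ∀ (m x : F) (k : K), mul m (k • x) = k • mul m x)
    (g : F → K)
    (hg : ∀ c : K, Nat.card {m : F | g m = c} = Fintype.card F / Fintype.card K)
    (f : F × F → K)
    (hf0 : ∀ y : F, f (0, y) = g 0)
    (hf : ∀ x : F, x ≠ 0 → ∀ m : F, f (x, mul m x) = g m) :
    ∀ z : F × F, z ≠ 0 → ∀ c : K,
      Nat.card {v : F × F | f (v + z) - f v = c}
        = Fintype.card (F × F) / Fintype.card K := by
  classical
  -- abbreviations
  set q := Fintype.card F with hq
  set kk := Fintype.card K with hkk
  set t := q / kk with htdef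
  -- fiber counts of g
  have hfib : ∀ c : K, #(univ.filter fun m => g m = c) = t := by
    intro c
    have h := hg c
    rwa [Nat.card_eq_fintype_card, Fintype.card_subtype] at h
  have hqt : q = kk * t := by
    have h := Finset.card_eq_sum_card_fiberwise (f := g) (s := (univ : Finset F))
      (t := (univ : Finset K)) (fun x _ => mem_univ _)
    simp only [hfib, sum_const, smul_eq_mul, card_univ] at h
    simpa [hq, hkk] using h
  have hq1 : 1 ≤ q := Fintype.card_pos
  have ht1 : 1 ≤ t := by
    rcases Nat.eq_zero_or_pos t with h | h
    · rw [h, Nat.mul_zero] at hqt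
      omega
    · exact h
  -- basic facts about mul
  have hmul0 : ∀ a : F, mul a 0 = 0 := by
    intro a
    have h := hdist a 0 0
    rw [add_zero] at h
    exact left_eq_add.mp h
  have hmulneg : ∀ a x : F, mul a (-x) = -(mul a x) := by
    intro a x
    have h := hdist a x (-x)
    rw [add_neg_cancel, hmul0] at h
    exact (neg_eq_of_add_eq_zero_right h.symm).symm
  have hbijL : ∀ x : F, x ≠ 0 → Function.Bijective (fun m => mul m x) := by
    intro x hx
    rw [← Finite.injective_iff_bijective]
    intro m n h
    by_contra hmn
    have h2 : (fun z => mul m z - mul n z) x = (fun z => mul m z - mul n z) 0 := by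
      simp only [hmul0, sub_zero, sub_eq_zero]
      exact h
    exact hx ((hbij m n hmn).1 h2)
  set invL : F → F → F := fun x => Function.invFun (fun m => mul m x) with hinvLdef
  have hinvL1 : ∀ x : F, x ≠ 0 → ∀ y, mul (invL x y) x = y := by
    intro x hx y
    exact Function.invFun_eq ((hbijL x hx).2 y)
  have hinvL2 : ∀ x : F, x ≠ 0 → ∀ m, invL x (mul m x) = m := by
    intro x hx m
    exact (hbijL x hx).1 (hinvL1 x hx (mul m x))
  have hfx : ∀ x : F, x ≠ 0 → ∀ y, f (x, y) = g (invL x y) := by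
    intro x hx y
    conv_lhs => rw [← hinvL1 x hx y]
    exact hf x hx _
  -- convolution count
  have cardP : ∀ c : K, #(univ.filter fun w : F × F => g w.2 - g w.1 = c) = q * t := by
    intro c
    rw [Finset.card_eq_sum_card_fiberwise (f := Prod.fst)
      (t := (univ : Finset F)) (fun x _ => mem_univ _)]
    have hinner : ∀ m : F, #((univ.filter fun w : F × F => g w.2 - g w.1 = c).filter
        fun w => w.1 = m) = t := by
      intro m
      rw [← hfib (c + g m)]
      refine Finset.card_nbij' (fun w => w.2) (fun y => (m, y)) ?_ ?_ ?_ ?_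
      · rintro ⟨m', y⟩ hw
        simp only [mem_coe, mem_filter, mem_univ, true_and] at hw ⊢
        obtain ⟨h1, h2⟩ := hw
        subst h2
        exact sub_eq_iff_eq_add.mp h1
      · intro y hy
        simp only [mem_coe, mem_filter, mem_univ, true_and] at hy ⊢
        exact ⟨sub_eq_iff_eq_add.mpr hy, trivial⟩
      · rintro ⟨m', y⟩ hw
        simp only [mem_coe, mem_filter] at hw
        simp [hw.2]
      · intro y hy; rfl
    simp [hinner, Finset.sum_const, card_univ, hq]
  -- main statement
  intro z hz c
  obtain ⟨a, b⟩ := z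
  have hNat : Nat.card {v : F × F | f (v + (a, b)) - f v = c}
      = #(univ.filter fun v : F × F => f (v + (a, b)) - f v = c) := by
    rw [Nat.card_eq_fintype_card]
    simp [Fintype.card_subtype]
  have hgoal : Fintype.card (F × F) / kk = q * t := by
    rw [Fintype.card_prod, ← hq]
    rw [show q * q = kk * (q * t) by rw [hqt]; ring]
    exact Nat.mul_div_cancel_left _ Fintype.card_pos
  rw [hNat, hgoal]
  by_cases ha : a = 0
  -- ==================== CASE a = 0 ====================
  · subst ha
    have hb : b ≠ 0 := by
      intro h
      exact hz (by simp [h, Prod.ext_iff])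
    set xs : F × F → F := fun w => Function.invFun (fun z => mul w.2 z - mul w.1 z) b with hxsdef
    have hxs : ∀ m m' : F, m ≠ m' →
        mul m' (xs (m, m')) - mul m (xs (m, m')) = b := by
      intro m m' h
      exact Function.invFun_eq ((hbij m' m (Ne.symm h)).2 b)
    rw [← cardP c]
    refine Finset.card_nbij'
      (fun v => if v.1 = 0 then (v.2, v.2) else (invL v.1 v.2, invL v.1 (v.2 + b)))
      (fun w => if w.1 = w.2 then ((0 : F), w.1) else (xs w, mul w.1 (xs w)))
      ?_ ?_ ?_ ?_
    · rintro ⟨x, y⟩ hv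
      simp only [mem_coe, mem_filter, mem_univ, true_and] at hv ⊢
      by_cases hx : x = 0
      · subst hx
        rw [if_pos rfl]
        rw [show ((0 : F), y) + ((0 : F), b) = ((0 : F), y + b) by simp, hf0, hf0] at hv
        simpa using hv
      · rw [if_neg hx]
        rw [show ((x : F), y) + ((0 : F), b) = (x, y + b) by simp,
          hfx x hx (y + b), hfx x hx y] at hv
        exact hv
    · rintro ⟨m, m'⟩ hw
      simp only [mem_coe, mem_filter, mem_univ, true_and] at hw ⊢
      by_cases hmm : m = m'
      · subst hmm
        rw [if_pos rfl]
        rw [show ((0 : F), m) + ((0 : F), b) = ((0 : F), m + b) by simp, hf0, hf0]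
        simpa using hw
      · rw [if_neg hmm]
        have hx0 := hxs m m' hmm
        have hxne : xs (m, m') ≠ 0 := by
          intro h
          rw [h, hmul0, hmul0, sub_zero] at hx0
          exact hb hx0.symm
        rw [show ((xs (m, m') : F), mul m (xs (m, m'))) + ((0 : F), b)
            = (xs (m, m'), mul m (xs (m, m')) + b) by simp]
        rw [show mul m (xs (m, m')) + b = mul m' (xs (m, m')) by
          rw [← hx0]; abel]
        rw [hf _ hxne m', hf _ hxne m]
        exact hw
    · rintro ⟨x, y⟩ hv
      dsimp only
      by_cases hx : x = 0
      · subst hx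
        simp
      · rw [if_neg hx]
        have hm : mul (invL x y) x = y := hinvL1 x hx y
        have hm' : mul (invL x (y + b)) x = y + b := hinvL1 x hx (y + b)
        have hmm : invL x y ≠ invL x (y + b) := by
          intro h
          rw [h, hm'] at hm
          exact hb (by linear_combination (norm := abel) hm)
        rw [if_neg hmm]
        have hx0 := hxs _ _ hmm
        have hxx : mul (invL x (y + b)) x - mul (invL x y) x = b := by
          rw [hm, hm']; abel
        have hxeq : xs (invL x y, invL x (y + b)) = x :=
          (hbij _ _ (Ne.symm hmm)).1 (hx0.trans hxx.symm)
        rw [hxeq, hm]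
    · rintro ⟨m, m'⟩ hw
      dsimp only
      by_cases hmm : m = m'
      · subst hmm
        simp
      · rw [if_neg hmm]
        have hx0 := hxs m m' hmm
        have hxne : xs (m, m') ≠ 0 := by
          intro h
          rw [h, hmul0, hmul0, sub_zero] at hx0
          exact hb hx0.symm
        rw [if_neg hxne]
        rw [hinvL2 _ hxne m]
        rw [show mul m (xs (m, m')) + b = mul m' (xs (m, m')) by rw [← hx0]; abel]
        rw [hinvL2 _ hxne m']
  -- ==================== CASE a ≠ 0 ====================
  · have hna : (-a : F) ≠ 0 := neg_ne_zero.mpr ha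
    have hq2 : 2 ≤ q := Fintype.one_lt_card_iff_nontrivial.mpr ⟨⟨a, 0, ha⟩⟩
    set m₀ : F := invL a b with hm₀def
    have hm₀ : mul m₀ a = b := hinvL1 a ha b
    have hm₀uniq : ∀ m : F, mul m a = b → m = m₀ := by
      intro m h
      have := hinvL2 a ha m
      rw [h] at this
      exact this.symm
    have haddne : ∀ x : F, x ≠ -a → x + a ≠ 0 := by
      intro x hxa h
      exact hxa (eq_neg_of_add_eq_zero_left h)
    -- the pieces
    set S : Finset (F × F) := univ.filter (fun v : F × F => f (v + (a, b)) - f v = c)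
      with hSdef
    set S1 : Finset (F × F) := S.filter (fun v => v.1 = 0) with hS1def
    set S2' : Finset (F × F) := S.filter (fun v => ¬ v.1 = 0) with hS2'def
    set S2 : Finset (F × F) := S2'.filter (fun v => v.1 = -a) with hS2def
    set S3 : Finset (F × F) := S2'.filter (fun v => ¬ v.1 = -a) with hS3def
    set S3d : Finset (F × F) := S3.filter (fun v => v.2 = mul m₀ v.1) with hS3ddef
    set S3o : Finset (F × F) := S3.filter (fun v => ¬ v.2 = mul m₀ v.1) with hS3odef
    set Pst : Finset (F × F) := univ.filter (fun w : F × F => g w.2 - g w.1 = c)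
      with hPstdef
    set R : Finset (F × F) := Pst.filter
      (fun w => w.1 = m₀ ∨ w.2 = m₀ ∨ w.1 = w.2) with hRdef
    set D : Finset (F × F) := Pst.filter
      (fun w => ¬ (w.1 = m₀ ∨ w.2 = m₀ ∨ w.1 = w.2)) with hDdef
    set R1 : Finset (F × F) := R.filter (fun w => w.1 = m₀) with hR1def
    set R' : Finset (F × F) := R.filter (fun w => ¬ w.1 = m₀) with hR'def
    set R2 : Finset (F × F) := R'.filter (fun w => w.2 = m₀) with hR2def
    set R3 : Finset (F × F) := R'.filter (fun w => ¬ w.2 = m₀) with hR3def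
    have splitS : #S1 + #S2' = #S := Finset.card_filter_add_card_filter_not _
    have splitS2 : #S2 + #S3 = #S2' := Finset.card_filter_add_card_filter_not _
    have splitS3 : #S3d + #S3o = #S3 := Finset.card_filter_add_card_filter_not _
    have splitP : #R + #D = #Pst := Finset.card_filter_add_card_filter_not _
    have splitR : #R1 + #R' = #R := Finset.card_filter_add_card_filter_not _
    have splitR' : #R2 + #R3 = #R' := Finset.card_filter_add_card_filter_not _
    have hPcard : #Pst = q * t := cardP c
    -- piece S1
    have cardS1 : #S1 = t := by
      rw [← hfib (c + g 0)]
      refine Finset.card_nbij' (fun v => invL a (v.2 + b)) (fun m => ((0 : F), mul m a - b))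
        ?_ ?_ ?_ ?_
      · rintro ⟨x, y⟩ hv
        simp only [mem_coe, hS1def, hSdef, mem_filter, mem_univ, true_and] at hv ⊢
        obtain ⟨h1, h2⟩ := hv
        subst h2
        rw [show ((0 : F), y) + (a, b) = (a, y + b) by simp, hfx a ha (y + b), hf0] at h1
        exact sub_eq_iff_eq_add.mp h1
      · intro m hm
        simp only [mem_coe, mem_filter, mem_univ, true_and] at hm
        simp only [mem_coe, hS1def, hSdef, mem_filter, mem_univ, true_and]
        refine ⟨?_, trivial⟩
        rw [show ((0 : F), mul m a - b) + (a, b) = (a, mul m a - b + b) by simp,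
          sub_add_cancel, hf a ha m, hf0]
        exact sub_eq_iff_eq_add.mpr hm
      · rintro ⟨x, y⟩ hv
        simp only [mem_coe, hS1def, hSdef, mem_filter, mem_univ, true_and] at hv
        obtain ⟨h1, h2⟩ := hv
        subst h2
        have h3 : mul (invL a (y + b)) a = y + b := hinvL1 a ha (y + b)
        dsimp only
        rw [h3]
        simp
      · intro m hm
        dsimp only
        rw [sub_add_cancel, hinvL2 a ha m]
    -- piece S2
    have cardS2 : #S2 = t := by
      rw [← hfib (g 0 - c)]
      refine Finset.card_nbij' (fun v => invL (-a) v.2) (fun m => ((-a : F), mul m (-a)))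
        ?_ ?_ ?_ ?_
      · rintro ⟨x, y⟩ hv
        simp only [mem_coe, hS2def, hS2'def, hSdef, mem_filter, mem_univ, true_and] at hv ⊢
        obtain ⟨⟨h1, _⟩, h2⟩ := hv
        subst h2
        rw [show ((-a : F), y) + (a, b) = ((0 : F), y + b) by simp, hf0,
          hfx (-a) hna y] at h1
        rw [← h1, sub_sub_cancel]
      · intro m hm
        simp only [mem_coe, mem_filter, mem_univ, true_and] at hm
        simp only [mem_coe, hS2def, hS2'def, hSdef, mem_filter, mem_univ, true_and]
        refine ⟨⟨?_, hna⟩, trivial⟩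
        rw [show ((-a : F), mul m (-a)) + (a, b) = ((0 : F), mul m (-a) + b) by simp,
          hf0, hf (-a) hna m, hm, sub_sub_cancel]
      · rintro ⟨x, y⟩ hv
        simp only [mem_coe, hS2def, hS2'def, hSdef, mem_filter, mem_univ, true_and] at hv
        obtain ⟨_, h2⟩ := hv
        subst h2
        dsimp only
        rw [hinvL1 (-a) hna y]
      · intro m hm
        dsimp only
        rw [hinvL2 (-a) hna m]
    -- piece R1
    have cardR1 : #R1 = t := by
      rw [← hfib (c + g m₀)]
      refine Finset.card_nbij' (fun w => w.2) (fun m => ((m₀ : F), m)) ?_ ?_ ?_ ?_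
      · rintro ⟨m, m'⟩ hw
        simp only [mem_coe, hR1def, hRdef, hPstdef, mem_filter, mem_univ, true_and] at hw ⊢
        obtain ⟨⟨h1, _⟩, h2⟩ := hw
        subst h2
        exact sub_eq_iff_eq_add.mp h1
      · intro m hm
        simp only [mem_coe, mem_filter, mem_univ, true_and] at hm
        simp only [mem_coe, hR1def, hRdef, hPstdef, mem_filter, mem_univ, true_and]
        exact ⟨⟨sub_eq_iff_eq_add.mpr hm, by simp⟩, by simp⟩
      · rintro ⟨m, m'⟩ hw
        simp only [mem_coe, hR1def, mem_filter] at hw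
        simp [hw.2]
      · intro m hm; rfl
    -- piece R2 (uniform, as an erase)
    have cardR2 : #R2 = #((univ.filter fun m => g m = g m₀ - c).erase m₀) := by
      refine Finset.card_nbij' (fun w => w.1) (fun m => ((m : F), m₀)) ?_ ?_ ?_ ?_
      · rintro ⟨m, m'⟩ hw
        simp only [mem_coe, hR2def, hR'def, hRdef, hPstdef, mem_filter, mem_univ, true_and] at hw
        obtain ⟨⟨⟨h1, _⟩, h3⟩, h2⟩ := hw
        subst h2
        rw [mem_coe, mem_erase]
        refine ⟨h3, ?_⟩
        simp only [mem_coe, mem_filter, mem_univ, true_and]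
        rw [← h1, sub_sub_cancel]
      · intro m hm
        rw [mem_coe, mem_erase] at hm
        obtain ⟨hne, hm⟩ := hm
        simp only [mem_coe, mem_filter, mem_univ, true_and] at hm
        simp only [mem_coe, hR2def, hR'def, hRdef, hPstdef, mem_filter, mem_univ, true_and]
        exact ⟨⟨⟨by rw [hm, sub_sub_cancel], by simp⟩, hne⟩, by simp⟩
      · rintro ⟨m, m'⟩ hw
        simp only [mem_coe, hR2def, mem_filter] at hw
        simp [hw.2]
      · intro m hm; rfl
    -- key facts for the big bijection
    have hkey : ∀ x y : F, x ≠ 0 → x ≠ -a → y ≠ mul m₀ x →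
        invL x y ≠ m₀ ∧ invL (x + a) (y + b) ≠ m₀ ∧ invL x y ≠ invL (x + a) (y + b) := by
      intro x y hx0 hxa hym
      have hm : mul (invL x y) x = y := hinvL1 x hx0 y
      have hxa0 : x + a ≠ 0 := haddne x hxa
      have hm'' : mul (invL (x + a) (y + b)) (x + a) = y + b := hinvL1 _ hxa0 _
      have h1 : invL x y ≠ m₀ := by
        intro h
        rw [h] at hm
        exact hym hm.symm
      have h2 : invL (x + a) (y + b) ≠ m₀ := by
        intro h
        rw [h, hdist, hm₀] at hm''
        exact hym (add_right_cancel hm'').symm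
      have h3 : invL x y ≠ invL (x + a) (y + b) := by
        intro h
        apply h1
        apply hm₀uniq
        rw [← h, hdist, hm] at hm''
        exact add_left_cancel hm''
      exact ⟨h1, h2, h3⟩
    set xsA : F × F → F := fun w =>
      Function.invFun (fun z => mul w.2 z - mul w.1 z) (b - mul w.2 a) with hxsAdef
    have hxsA : ∀ m m'' : F, m ≠ m'' →
        mul m'' (xsA (m, m'')) - mul m (xsA (m, m'')) = b - mul m'' a := by
      intro m m'' h
      exact Function.invFun_eq ((hbij m'' m (Ne.symm h)).2 _)
    have hkey2 : ∀ m m'' : F, m ≠ m₀ → m'' ≠ m₀ → m ≠ m'' →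
        xsA (m, m'') ≠ 0 ∧ xsA (m, m'') ≠ -a ∧
          mul m'' (xsA (m, m'') + a) = mul m (xsA (m, m'')) + b := by
      intro m m'' hm hm'' hne
      have hx := hxsA m m'' hne
      have h0 : xsA (m, m'') ≠ 0 := by
        intro h
        rw [h, hmul0, hmul0, sub_zero] at hx
        exact hm'' (hm₀uniq m'' (sub_eq_zero.mp hx.symm).symm)
      have hA : xsA (m, m'') ≠ -a := by
        intro h
        rw [h, hmulneg, hmulneg] at hx
        have hL : -(mul m'' a) - -(mul m a) = mul m a - mul m'' a := by abel
        rw [hL] at hx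
        exact hm (hm₀uniq m (sub_left_inj.mp hx))
      have hE : mul m'' (xsA (m, m'') + a) = mul m (xsA (m, m'')) + b := by
        rw [hdist]
        have h5 := sub_eq_sub_iff_add_eq_add.mp hx
        rw [h5]
        exact add_comm _ _
      exact ⟨h0, hA, hE⟩
    have hS3oD : #S3o = #D := by
      refine Finset.card_nbij'
        (fun v => (invL v.1 v.2, invL (v.1 + a) (v.2 + b)))
        (fun w => (xsA w, mul w.1 (xsA w))) ?_ ?_ ?_ ?_
      · rintro ⟨x, y⟩ hv
        simp only [mem_coe, hS3odef, hS3def, hS2'def, hSdef, mem_filter, mem_univ, true_and] at hv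
        obtain ⟨⟨⟨h1, hx0⟩, hxa⟩, hym⟩ := hv
        obtain ⟨k1, k2, k3⟩ := hkey x y hx0 hxa hym
        simp only [mem_coe, hDdef, hPstdef, mem_filter, mem_univ, true_and]
        constructor
        · rw [show ((x : F), y) + (a, b) = (x + a, y + b) by simp,
            hfx (x + a) (haddne x hxa) (y + b), hfx x hx0 y] at h1
          exact h1
        · push_neg
          exact ⟨k1, k2, k3⟩
      · rintro ⟨m, m''⟩ hw
        simp only [mem_coe, hDdef, hPstdef, mem_filter, mem_univ, true_and] at hw
        obtain ⟨h1, h2⟩ := hw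
        push_neg at h2
        obtain ⟨hm, hm'', hne⟩ := h2
        obtain ⟨h0, hA, hE⟩ := hkey2 m m'' hm hm'' hne
        simp only [mem_coe, hS3odef, hS3def, hS2'def, hSdef, mem_filter, mem_univ, true_and]
        refine ⟨⟨⟨?_, h0⟩, hA⟩, ?_⟩
        · rw [show ((xsA (m, m'') : F), mul m (xsA (m, m''))) + (a, b)
              = (xsA (m, m'') + a, mul m (xsA (m, m'')) + b) by simp,
            ← hE, hf _ (haddne _ hA) m'', hf _ h0 m]
          exact h1
        · intro h
          exact hm ((hbijL _ h0).1 h)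
      · rintro ⟨x, y⟩ hv
        simp only [mem_coe, hS3odef, hS3def, hS2'def, hSdef, mem_filter, mem_univ, true_and] at hv
        obtain ⟨⟨⟨h1, hx0⟩, hxa⟩, hym⟩ := hv
        obtain ⟨k1, k2, k3⟩ := hkey x y hx0 hxa hym
        have hm := hinvL1 x hx0 y
        have hm'' := hinvL1 (x + a) (haddne x hxa) (y + b)
        have hxx : mul (invL (x + a) (y + b)) x - mul (invL x y) x
            = b - mul (invL (x + a) (y + b)) a := by
          have e1 : mul (invL (x + a) (y + b)) (x + a)
              = mul (invL (x + a) (y + b)) x + mul (invL (x + a) (y + b)) a :=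
            hdist _ _ _
          rw [hm''] at e1
          have e2 : mul (invL (x + a) (y + b)) x
              = y + b - mul (invL (x + a) (y + b)) a :=
            eq_sub_of_add_eq e1.symm
          rw [hm, e2]
          abel
        have hxs' := hxsA _ _ k3
        have hxeq : xsA (invL x y, invL (x + a) (y + b)) = x :=
          (hbij _ _ (Ne.symm k3)).1 (hxs'.trans hxx.symm)
        dsimp only
        rw [hxeq, hm]
      · rintro ⟨m, m''⟩ hw
        simp only [mem_coe, hDdef, hPstdef, mem_filter, mem_univ, true_and] at hw
        obtain ⟨h1, h2⟩ := hw
        push_neg at h2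
        obtain ⟨hm, hm'', hne⟩ := h2
        obtain ⟨h0, hA, hE⟩ := hkey2 m m'' hm hm'' hne
        dsimp only
        rw [hinvL2 _ h0 m,
          show mul m (xsA (m, m'')) + b = mul m'' (xsA (m, m'') + a) from hE.symm,
          hinvL2 _ (haddne _ hA) m'']
    -- now split on c
    by_cases hc : c = 0
    · -- c = 0
      subst hc
      have cardR2' : #R2 = t - 1 := by
        rw [cardR2, Finset.card_erase_of_mem (by simp), hfib]
      have cardR3 : #R3 = q - 1 := by
        have : #R3 = #(univ.erase m₀) := by
          refine Finset.card_nbij' (fun w => w.1) (fun m => ((m : F), m)) ?_ ?_ ?_ ?_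
          · rintro ⟨m, m'⟩ hw
            simp only [mem_coe, hR3def, hR'def, hRdef, hPstdef, mem_filter, mem_univ,
              true_and] at hw
            exact mem_erase.mpr ⟨hw.1.2, mem_univ _⟩
          · intro m hm
            rw [mem_coe, mem_erase] at hm
            simp only [mem_coe, hR3def, hR'def, hRdef, hPstdef, mem_filter, mem_univ, true_and]
            exact ⟨⟨⟨by simp, by simp⟩, hm.1⟩, hm.1⟩
          · rintro ⟨m, m'⟩ hw
            simp only [mem_coe, hR3def, hR'def, hRdef, hPstdef, mem_filter, mem_univ,
              true_and] at hw
            obtain ⟨⟨⟨h1, h2⟩, h3⟩, h4⟩ := hw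
            rcases h2 with h | h | h
            · exact absurd h h3
            · exact absurd h h4
            · simp [h]
          · intro m hm; rfl
        rw [this, Finset.card_erase_of_mem (mem_univ _), card_univ]
      have cardS3d : #S3d = q - 1 - 1 := by
        have : #S3d = #((univ.erase (0 : F)).erase (-a)) := by
          refine Finset.card_nbij' (fun v => v.1) (fun x => ((x : F), mul m₀ x)) ?_ ?_ ?_ ?_
          · rintro ⟨x, y⟩ hv
            simp only [mem_coe, hS3ddef, hS3def, hS2'def, hSdef, mem_filter, mem_univ,
              true_and] at hv
            exact mem_erase.mpr ⟨hv.1.2, mem_erase.mpr ⟨hv.1.1.2, mem_univ _⟩⟩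
          · intro x hx
            rw [mem_coe, mem_erase, mem_erase] at hx
            obtain ⟨hxa, hx0, _⟩ := hx
            simp only [mem_coe, hS3ddef, hS3def, hS2'def, hSdef, mem_filter, mem_univ, true_and]
            refine ⟨⟨⟨?_, hx0⟩, hxa⟩, trivial⟩
            rw [show ((x : F), mul m₀ x) + (a, b) = (x + a, mul m₀ x + b) by simp,
              ← hm₀, ← hdist, hf (x + a) (haddne x hxa) m₀, hf x hx0 m₀, sub_self]
          · rintro ⟨x, y⟩ hv
            simp only [mem_coe, hS3ddef, mem_filter] at hv
            simp [hv.2]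
          · intro x hx; rfl
        rw [this, Finset.card_erase_of_mem, Finset.card_erase_of_mem (mem_univ _),
          card_univ]
        exact mem_erase.mpr ⟨hna, mem_univ _⟩
      -- the big bijection S3o ≃ D, proved below uniformly
      rw [← splitS, ← splitS2, ← splitS3, cardS1, cardS2, cardS3d, hS3oD,
        ← hPcard, ← splitP, ← splitR, ← splitR', cardR1, cardR2', cardR3]
      omega
    · -- c ≠ 0
      have cardR2' : #R2 = t := by
        rw [cardR2, Finset.erase_eq_of_notMem, hfib]
        simp only [mem_coe, mem_filter, mem_univ, true_and]
        intro h
        apply hc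
        have := sub_eq_iff_eq_add.mp h.symm
        linear_combination h
      have cardR3 : #R3 = 0 := by
        rw [Finset.card_eq_zero, Finset.filter_eq_empty_iff]
        intro w hw
        simp only [mem_coe, hR'def, hRdef, hPstdef, mem_filter, mem_univ, true_and] at hw
        obtain ⟨⟨h1, h2⟩, h3⟩ := hw
        intro h4
        rcases h2 with h | h | h
        · exact h3 h
        · exact h4 h
        · rw [h, sub_self] at h1
          exact hc h1.symm
      have cardS3d : #S3d = 0 := by
        rw [Finset.card_eq_zero, Finset.filter_eq_empty_iff]
        rintro ⟨x, y⟩ hv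
        simp only [mem_coe, hS3def, hS2'def, hSdef, mem_filter, mem_univ, true_and] at hv
        obtain ⟨⟨h1, hx0⟩, hxa⟩ := hv
        intro heq
        simp only at heq
        rw [heq] at h1
        rw [show ((x : F), mul m₀ x) + (a, b) = (x + a, mul m₀ x + b) by simp,
          ← hm₀, ← hdist, hf (x + a) (haddne x hxa) m₀, hf x hx0 m₀, sub_self] at h1
        exact hc h1.symm
      rw [← splitS, ← splitS2, ← splitS3, cardS1, cardS2, cardS3d, hS3oD,
        ← hPcard, ← splitP, ← splitR, ← splitR', cardR1, cardR2', cardR3]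
      omega
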